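/- Let k be a field of characteristic zero and A a finite-dimensional semisimple k-algebra. Then there exists a separability idempotent e ∈ A ⊗_k A that is invariant under all algebra automorphisms: for every k-algebra automorphism σ : A ≃ₐ[k] A one has (σ ⊗ σ)(e) = e, where σ ⊗ σ denotes the induced map TensorProduct.map on A ⊗_k A. -/

import Mathlib

set_option linter.unusedSectionVars false

open scoped TensorProduct
open LinearMap

section Aux
variable (k : Type*) [Field k]
    (A : Type*) [Ring A] [Algebra k A] [FiniteDimensional k A]

/-- The trace of left multiplication. -/
noncomputable def trT : A →ₗ[k] k := (LinearMap.trace k A) ∘ₗ (LinearMap.mul k A)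

/-- The regular trace form. -/
noncomputable def trB : LinearMap.BilinForm k A := (LinearMap.mul k A).compr₂ (trT k A)

variable {k A}

lemma trT_apply (a : A) : trT k A a = LinearMap.trace k A (LinearMap.mulLeft k a) := by
  simp [trT, Module.End.mul_eq_comp]
  rfl

lemma trB_apply (x y : A) : trB k A x y = trT k A (x * y) := rfl

lemma trT_mul_comm (x y : A) : trT k A (x * y) = trT k A (y * x) := by
  rw [trT_apply, trT_apply, LinearMap.mulLeft_mul, LinearMap.mulLeft_mul]
  exact LinearMap.trace_mul_comm k (LinearMap.mulLeft k x) (LinearMap.mulLeft k y)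

lemma trB_isSymm : (trB k A).IsSymm := ⟨fun x y => by
  simp [trB_apply, trT_mul_comm x y]⟩

end Aux

section Nondeg
variable {k : Type*} [Field k] [CharZero k]
    {A : Type*} [Ring A] [Algebra k A] [FiniteDimensional k A]
    [IsSemisimpleRing A]

lemma trB_nondegenerate : (trB k A).Nondegenerate := by
  classical
  -- the radical, as a left ideal
  set I : Submodule A A :=
    { carrier := {x | ∀ y, trB k A x y = 0}
      add_mem' := fun {a b} ha hb y => by
        simp only [map_add, LinearMap.add_apply, ha y, hb y, add_zero]
      zero_mem' := fun y => by simp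
      smul_mem' := fun a x hx y => by
        have : trB k A (a * x) y = trB k A x (y * a) := by
          simp only [trB_apply, mul_assoc]
          rw [trT_mul_comm, mul_assoc]
        simpa [smul_eq_mul, this] using hx (y * a) } with hI
  obtain ⟨J, hJ⟩ := exists_isCompl I
  set π := I.linearProjOfIsCompl J hJ with hπ
  set e : A := ((π 1 : I) : A) with he
  have heI : e ∈ I := (π 1).2
  have hxe : ∀ x ∈ I, x = x * e := by
    intro x hx
    have h1 : π x = ⟨x, hx⟩ := Submodule.linearProjOfIsCompl_apply_left hJ ⟨x, hx⟩
    have h2 : π x = x • π 1 := by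
      rw [← map_smul, smul_eq_mul, mul_one]
    have := congrArg (Subtype.val) (h1.symm.trans h2)
    simpa [he, smul_eq_mul] using this
  have hee : e = e * e := hxe e heI
  -- left multiplication by e is a projection
  have hproj : LinearMap.IsProj (LinearMap.range (LinearMap.mulLeft k e))
      (LinearMap.mulLeft k e) := by
    constructor
    · intro x; exact LinearMap.mem_range_self _ x
    · rintro x ⟨y, rfl⟩
      simp only [LinearMap.mulLeft_apply, ← mul_assoc, ← hee]
  have htr : LinearMap.trace k A (LinearMap.mulLeft k e) = 0 := by
    have := heI 1
    rwa [trB_apply, mul_one, trT_apply] at this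
  have hrank : (Module.finrank k (LinearMap.range (LinearMap.mulLeft k e)) : k) = 0 := by
    rw [← hproj.trace, htr]
  have h0 : LinearMap.range (LinearMap.mulLeft k e) = ⊥ := by
    have : Module.finrank k (LinearMap.range (LinearMap.mulLeft k e)) = 0 := by
      exact_mod_cast hrank
    exact Submodule.finrank_eq_zero.mp this
  have he0 : e = 0 := by
    have : e * e = 0 := by
      have : e * e ∈ LinearMap.range (LinearMap.mulLeft k e) :=
        ⟨e, rfl⟩
      rwa [h0, Submodule.mem_bot] at this
    rw [hee, this]
  refine (trB_isSymm (k := k) (A := A)).isRefl.nondegenerate_iff_separatingLeft.mpr ?_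
  intro x hx
  have : x ∈ I := hx
  rw [hxe x this, he0, mul_zero]

end Nondeg

section Casimir
variable {k : Type*} [Field k] {A : Type*} [Ring A] [Algebra k A]

open Finset in
lemma repr_eq_left {ι : Type*} [Fintype ι] [DecidableEq ι]
    (B : LinearMap.BilinForm k A) (b : Module.Basis ι k A) (y : ι → A)
    (h : ∀ i j, B (b i) (y j) = if i = j then 1 else 0) (v : A) (j : ι) :
    b.repr v j = B v (y j) := by
  conv_rhs => rw [← b.sum_repr v]
  simp only [map_sum, LinearMap.coe_sum, Finset.sum_apply, map_smul,
    LinearMap.smul_apply, h, smul_eq_mul, mul_ite, mul_one, mul_zero]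
  simp

open Finset in
lemma repr_eq_right {ι : Type*} [Fintype ι] [DecidableEq ι]
    (B : LinearMap.BilinForm k A) (x : ι → A) (y : Module.Basis ι k A)
    (h : ∀ i j, B (x i) (y j) = if i = j then 1 else 0) (w : A) (j : ι) :
    y.repr w j = B (x j) w := by
  conv_rhs => rw [← y.sum_repr w]
  simp only [map_sum, map_smul, h, smul_eq_mul, mul_ite, mul_one, mul_zero]
  simp

open Finset in
lemma casimir_indep {ι κ : Type*} [Fintype ι] [DecidableEq ι] [Fintype κ] [DecidableEq κ]
    (B : LinearMap.BilinForm k A)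
    (x : Module.Basis ι k A) (y : Module.Basis ι k A) (u : Module.Basis κ k A) (v : Module.Basis κ k A)
    (hxy : ∀ i j, B (x i) (y j) = if i = j then 1 else 0)
    (huv : ∀ i j, B (u i) (v j) = if i = j then 1 else 0) :
    ∑ i, x i ⊗ₜ[k] y i = ∑ j, u j ⊗ₜ[k] v j := by
  have lhs : ∑ i, x i ⊗ₜ[k] y i = ∑ i, ∑ j, B (x i) (v j) • (u j ⊗ₜ[k] y i) := by
    refine Finset.sum_congr rfl fun i _ => ?_
    conv_lhs => rw [← u.sum_repr (x i)]
    rw [TensorProduct.sum_tmul]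
    refine Finset.sum_congr rfl fun j _ => ?_
    rw [repr_eq_left B u v huv, TensorProduct.smul_tmul']
  have rhs : ∑ j, u j ⊗ₜ[k] v j = ∑ j, ∑ i, B (x i) (v j) • (u j ⊗ₜ[k] y i) := by
    refine Finset.sum_congr rfl fun j _ => ?_
    conv_lhs => rw [← y.sum_repr (v j)]
    rw [TensorProduct.tmul_sum]
    refine Finset.sum_congr rfl fun i _ => ?_
    rw [repr_eq_right B x y hxy, TensorProduct.tmul_smul]
  rw [lhs, rhs, Finset.sum_comm]

end Casimir

section Inv
variable {k : Type*} [Field k] {A : Type*} [Ring A] [Algebra k A] [FiniteDimensional k A]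

lemma trT_aut (σ : A ≃ₐ[k] A) (w : A) : trT k A (σ w) = trT k A w := by
  rw [trT_apply, trT_apply]
  have h : LinearMap.mulLeft k (σ w) = σ.toLinearEquiv.conj (LinearMap.mulLeft k w) := by
    ext x
    simp [LinearEquiv.conj_apply, map_mul]
  rw [h, LinearMap.trace_conj']

lemma trB_aut (σ : A ≃ₐ[k] A) (x y : A) : trB k A (σ x) (σ y) = trB k A x y := by
  rw [trB_apply, trB_apply, ← map_mul, trT_aut]

end Inv

/-- A finite-dimensional semisimple algebra over a field of characteristic
zero possesses a separability idempotent invariant under all algebra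
automorphisms. -/
theorem exists_automorphism_invariant_separability_idempotent
    (k : Type*) [Field k] [CharZero k]
    (A : Type*) [Ring A] [Algebra k A] [FiniteDimensional k A]
    [IsSemisimpleRing A] :
    ∃ e : A ⊗[k] A,
      LinearMap.mul' k A e = 1 ∧
      (∀ a : A, (a ⊗ₜ[k] (1 : A)) * e = e * ((1 : A) ⊗ₜ[k] a)) ∧
      ∀ σ : A ≃ₐ[k] A,
        TensorProduct.map σ.toLinearMap σ.toLinearMap e = e := by
  classical
  have hB : (trB k A).Nondegenerate := trB_nondegenerate
  have hsym : (trB k A).IsSymm := trB_isSymm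
  set B := trB k A with hBdef
  set b := Module.finBasis k A with hb
  set d := B.dualBasis hB b with hd
  have hbd : ∀ i j, B (b i) (d j) = if i = j then 1 else 0 := fun i j =>
    B.apply_dualBasis_right hB hsym b i j
  refine ⟨∑ i, b i ⊗ₜ[k] d i, ?_, ?_, ?_⟩
  · -- multiplication sends e to 1
    rw [map_sum]
    simp only [LinearMap.mul'_apply]
    have key : ∀ a : A, B a (∑ i, b i * d i) = B a 1 := by
      intro a
      have h1 : B a (∑ i, b i * d i) = LinearMap.trace k A (LinearMap.mulLeft k a) := by
        rw [map_sum, LinearMap.trace_eq_matrix_trace k b, Matrix.trace]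
        refine Finset.sum_congr rfl fun i _ => ?_
        rw [Matrix.diag_apply, LinearMap.toMatrix_apply, LinearMap.mulLeft_apply,
          repr_eq_left B b d hbd]
        show trT k A (a * (b i * d i)) = trT k A ((a * b i) * d i)
        rw [mul_assoc]
      have h2 : B a (1 : A) = LinearMap.trace k A (LinearMap.mulLeft k a) := by
        show trT k A (a * 1) = _
        rw [mul_one, trT_apply]
      rw [h1, h2]
    have h0 : ∀ n, B ((∑ i, b i * d i) - 1) n = 0 := by
      intro n
      have e1 : B (∑ i, b i * d i) n = B n (∑ i, b i * d i) := hsym.eq _ n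
      have e2 : B (1 : A) n = B n 1 := hsym.eq 1 n
      rw [map_sub, LinearMap.sub_apply, e1, e2, key n, sub_self]
    have := hB.1 _ h0
    rwa [sub_eq_zero] at this
  · -- separability property
    intro a
    rw [Finset.mul_sum, Finset.sum_mul]
    simp only [Algebra.TensorProduct.tmul_mul_tmul, one_mul, mul_one]
    have lhs : ∀ i, (a * b i) ⊗ₜ[k] d i = ∑ j, B (a * b i) (d j) • (b j ⊗ₜ[k] d i) := by
      intro i
      conv_lhs => rw [← b.sum_repr (a * b i)]
      rw [TensorProduct.sum_tmul]
      exact Finset.sum_congr rfl fun j _ => by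
        rw [repr_eq_left B b d hbd, TensorProduct.smul_tmul']
    have rhs : ∀ i, b i ⊗ₜ[k] (d i * a) = ∑ j, B (b j) (d i * a) • (b i ⊗ₜ[k] d j) := by
      intro i
      conv_lhs => rw [← d.sum_repr (d i * a)]
      rw [TensorProduct.tmul_sum]
      exact Finset.sum_congr rfl fun j _ => by
        rw [repr_eq_right B b d hbd, TensorProduct.tmul_smul]
    simp only [lhs, rhs]
    rw [Finset.sum_comm]
    refine Finset.sum_congr rfl fun i _ => Finset.sum_congr rfl fun j _ => ?_
    congr 1
    show trT k A ((a * b j) * d i) = trT k A (b j * (d i * a))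
    rw [mul_assoc, trT_mul_comm, ← mul_assoc]
  · -- automorphism invariance
    intro σ
    rw [map_sum]
    simp only [TensorProduct.map_tmul, AlgEquiv.toLinearMap_apply]
    have h' : ∀ i j, B ((b.map σ.toLinearEquiv) i) ((d.map σ.toLinearEquiv) j)
        = if i = j then 1 else 0 := by
      intro i j
      rw [Module.Basis.map_apply, Module.Basis.map_apply]
      show B (σ (b i)) (σ (d j)) = _
      rw [hBdef, trB_aut]
      exact hbd i j
    have := casimir_indep B (b.map σ.toLinearEquiv) (d.map σ.toLinearEquiv) b d h' hbd
    simpa [Module.Basis.map_apply] using this
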